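/- Let p(λ) = sup_{x∈K} φ(x,λ) where K ⊆ ℝ is compact, φ is continuous, convex in λ for each x, and ∂φ/∂λ(x,λ) = g(x) for a continuous strictly increasing function g. Then p is differentiable at λ if and only if the argmax set Ω(λ) = argmax_{x∈K} φ(·,λ) is a singleton {x̄}, and in that case p'(λ) = g(x̄). -/

import Mathlib

open Filter Topology

/-- Danskin-type theorem: for `p(λ) = max_{x ∈ K} φ(x,λ)` with `K` compact,
`φ` continuous and convex in `λ` with `∂φ/∂λ(x,λ) = g(x)` for a continuous
strictly increasing `g`, the function `p` is differentiable at `λ` iff the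
argmax set is a singleton `{x̄}`, in which case `p'(λ) = g(x̄)`. -/
theorem danskin_differentiability
    (K : Set ℝ) (hK : IsCompact K) (hKne : K.Nonempty)
    (φ : ℝ → ℝ → ℝ) (hφcont : Continuous (Function.uncurry φ))
    (hφconv : ∀ x, ConvexOn ℝ Set.univ (φ x))
    (g : ℝ → ℝ) (hg : Continuous g) (hgmono : StrictMono g)
    (hφderiv : ∀ x lam, HasDerivAt (φ x) (g x) lam)
    (p : ℝ → ℝ) (hp : ∀ lam, IsGreatest ((fun x => φ x lam) '' K) (p lam)) :
    ∀ lam : ℝ,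
      (DifferentiableAt ℝ p lam ↔ ∃! x, x ∈ K ∧ φ x lam = p lam) ∧
      (∀ xbar, xbar ∈ K → φ xbar lam = p lam → DifferentiableAt ℝ p lam →
        deriv p lam = g xbar) := by
  -- Since φ(x,·) has constant derivative g(x), it is affine:
  have haff : ∀ x a b : ℝ, φ x b = φ x a + g x * (b - a) := by
    intro x a b
    have h : ∀ t : ℝ, HasDerivAt (fun s => φ x s - g x * s) 0 t := by
      intro t
      exact (by simpa using (hφderiv x t).sub ((hasDerivAt_id t).const_mul (g x)) :
        HasDerivAt (φ x - fun y => g x * y) 0 t)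
    have hconst := is_const_of_deriv_eq_zero
      (fun t => (h t).differentiableAt) (fun t => (h t).deriv) b a
    linarith
  have hub : ∀ μ x, x ∈ K → φ x μ ≤ p μ := fun μ x hx => (hp μ).2 ⟨x, hx, rfl⟩
  -- the derivative claim, proved first since it implies uniqueness
  have hderiv_claim : ∀ lam xbar, xbar ∈ K → φ xbar lam = p lam →
      DifferentiableAt ℝ p lam → deriv p lam = g xbar := by
    intro lam xbar hxK hxmax hd
    have hmin : IsLocalMin (fun μ => p μ - (p lam + g xbar * (μ - lam))) lam := by
      apply Filter.Eventually.of_forall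
      intro μ
      have h1 : φ xbar μ ≤ p μ := hub μ xbar hxK
      have h2 : φ xbar μ = φ xbar lam + g xbar * (μ - lam) := haff xbar lam μ
      simp only
      linarith
    have hder : HasDerivAt (fun μ => p μ - (p lam + g xbar * (μ - lam)))
        (deriv p lam - g xbar) lam := by
      have h1 : HasDerivAt (fun μ : ℝ => p lam + g xbar * (μ - lam)) (g xbar) lam := by
        simpa using (((hasDerivAt_id lam).sub_const lam).const_mul (g xbar)).const_add (p lam)
      exact hd.hasDerivAt.sub h1
    have := hmin.hasDerivAt_eq_zero hder
    linarith
  intro lam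
  constructor
  · constructor
    · -- differentiable ⇒ unique maximizer
      intro hd
      obtain ⟨x0, hx0K, hx0⟩ := (hp lam).1
      refine ⟨x0, ⟨hx0K, hx0⟩, ?_⟩
      rintro y ⟨hyK, hy⟩
      have e1 := hderiv_claim lam y hyK hy hd
      have e2 := hderiv_claim lam x0 hx0K hx0 hd
      exact hgmono.injective (e1 ▸ e2)
    · -- unique maximizer ⇒ differentiable
      rintro ⟨xb, ⟨hxbK, hxbmax⟩, huniq⟩
      suffices h : HasDerivAt p (g xb) lam from h.differentiableAt
      obtain ⟨C, hC⟩ := hK.exists_bound_of_continuousOn hg.continuousOn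
      set M : ℝ := |C| + 1 with hMdef
      have hM : ∀ x ∈ K, |g x| ≤ M := by
        intro x hx
        have := hC x hx
        rw [Real.norm_eq_abs] at this
        have : |g x| ≤ |C| := le_trans this (le_abs_self C)
        linarith
      have hM1 : (1 : ℝ) ≤ M := by rw [hMdef]; linarith [abs_nonneg C]
      rw [hasDerivAt_iff_isLittleO, Asymptotics.isLittleO_iff]
      intro ε hε
      -- find δ > 0 so that all maximizers for |μ-λ| ≤ δ are ε-close to xb in g-value
      have hδex : ∃ δ > 0, ∀ μ, |μ - lam| ≤ δ → ∀ x ∈ K, φ x μ = p μ →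
          |g x - g xb| < ε := by
        set S : Set ℝ := K ∩ {x | ε ≤ |g x - g xb|} with hSdef
        have hSc : IsCompact S :=
          hK.inter_right (isClosed_le continuous_const ((hg.sub continuous_const).abs))
        rcases S.eq_empty_or_nonempty with hSe | hSne
        · refine ⟨1, one_pos, fun μ _ x hxK _ => ?_⟩
          by_contra hcon
          have : x ∈ S := ⟨hxK, not_lt.mp hcon⟩
          simp [hSe] at this
        · have hcont : ContinuousOn (fun x => φ x lam) S := by
            have : Continuous (fun x => φ x lam) :=
              hφcont.comp (continuous_id.prodMk continuous_const)
            exact this.continuousOn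
          obtain ⟨y, hyS, hymax⟩ := hSc.exists_isMaxOn hSne hcont
          set m : ℝ := φ y lam with hmdef
          have hmlt : m < p lam := by
            rcases lt_or_eq_of_le (hub lam y hyS.1) with h | h
            · exact h
            · exfalso
              have : y = xb := huniq y ⟨hyS.1, h⟩
              have h2 : ε ≤ |g y - g xb| := hyS.2
              rw [this] at h2
              simp at h2
              linarith
          refine ⟨(p lam - m) / (2 * M + 1), div_pos (by linarith) (by linarith), ?_⟩
          intro μ hμ x hxK hxmax
          by_contra hcon
          have hxS : x ∈ S := ⟨hxK, not_lt.mp hcon⟩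
          have hxm : φ x lam ≤ m := hymax hxS
          set δ : ℝ := (p lam - m) / (2 * M + 1) with hδdef
          have hδpos : 0 < δ := div_pos (by linarith) (by linarith)
          have hb1 : g x * (μ - lam) ≤ M * δ := by
            calc g x * (μ - lam) ≤ |g x * (μ - lam)| := le_abs_self _
              _ = |g x| * |μ - lam| := abs_mul _ _
              _ ≤ M * δ := by
                  apply mul_le_mul (hM x hxK) hμ (abs_nonneg _) (by linarith)
          have hb2 : -(M * δ) ≤ g xb * (μ - lam) := by
            have : |g xb * (μ - lam)| ≤ M * δ := by
              rw [abs_mul]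
              apply mul_le_mul (hM xb hxbK) hμ (abs_nonneg _) (by linarith)
            linarith [neg_abs_le (g xb * (μ - lam))]
          have e1 : φ x μ = φ x lam + g x * (μ - lam) := haff x lam μ
          have e2 : φ xb μ = φ xb lam + g xb * (μ - lam) := haff xb lam μ
          have h3 : φ xb μ ≤ p μ := hub μ xb hxbK
          -- p lam - Mδ ≤ p μ = φ x μ ≤ m + Mδ
          have hfin : p lam - m ≤ 2 * (M * δ) := by
            rw [← hxmax] at h3
            linarith
          have : 2 * M * δ < (2 * M + 1) * δ := by nlinarith
          rw [hδdef] at this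
          rw [mul_div_cancel₀ _ (ne_of_gt (by linarith : (0:ℝ) < 2 * M + 1))] at this
          nlinarith
      obtain ⟨δ, hδpos, hδ⟩ := hδex
      have hball : Metric.closedBall lam δ ∈ 𝓝 lam := Metric.closedBall_mem_nhds lam hδpos
      filter_upwards [hball] with μ hμ
      rw [Metric.mem_closedBall, Real.dist_eq] at hμ
      obtain ⟨xμ, hxμK, hxμ⟩ := (hp μ).1
      simp only at hxμ
      have hclose : |g xμ - g xb| < ε := hδ μ hμ xμ hxμK hxμ
      have e1 : φ xμ μ = φ xμ lam + g xμ * (μ - lam) := haff xμ lam μ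
      have e2 : φ xb μ = φ xb lam + g xb * (μ - lam) := haff xb lam μ
      have h1 : φ xμ lam ≤ p lam := hub lam xμ hxμK
      have h2 : φ xb μ ≤ p μ := hub μ xb hxbK
      have hlow : 0 ≤ p μ - p lam - (μ - lam) * g xb := by
        rw [← hxbmax]; rw [e2] at h2; linarith
      have hup : p μ - p lam - (μ - lam) * g xb ≤ (g xμ - g xb) * (μ - lam) := by
        rw [← hxμ, e1]; ring_nf; nlinarith
      have hb : (g xμ - g xb) * (μ - lam) ≤ ε * |μ - lam| := by
        calc (g xμ - g xb) * (μ - lam) ≤ |(g xμ - g xb) * (μ - lam)| := le_abs_self _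
          _ = |g xμ - g xb| * |μ - lam| := abs_mul _ _
          _ ≤ ε * |μ - lam| := mul_le_mul_of_nonneg_right hclose.le (abs_nonneg _)
      rw [Real.norm_eq_abs, Real.norm_eq_abs, smul_eq_mul]
      rw [abs_of_nonneg hlow]
      linarith
  · exact hderiv_claim lam
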